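/- For each n ≥ 1 (with n > 1/R), the 'flat-measure' polar integral of the same function g_n equals 4π(ln R + ln n); in particular it tends to infinity as n → ∞, while ∫_{ℝ²}|g_n|² dξ stays bounded by 2πR. -/

import Mathlib

open MeasureTheory Real

/-- The unit vector of angle `θ` in `ℝ²`. -/
noncomputable def unitVec (θ : ℝ) : EuclideanSpace ℝ (Fin 2) :=
  (WithLp.equiv 2 (Fin 2 → ℝ)).symm ![Real.cos θ, Real.sin θ]

lemma norm_unitVec (θ : ℝ) : ‖unitVec θ‖ = 1 := by
  have : ‖unitVec θ‖ = Real.sqrt (Real.cos θ ^ 2 + Real.sin θ ^ 2) := by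
    rw [EuclideanSpace.norm_eq]
    simp [unitVec, Fin.sum_univ_two, sq_abs]
  rw [this, Real.cos_sq_add_sin_sq, Real.sqrt_one]

/-- For `g_n(ξ) = |ξ|^{-1/2}·1_{1/n ≤ |ξ| ≤ R}`, the "flat-measure" polar integral
`2∫_{S¹}∫_{1/n}^R |g_n(σω)|² dσ dω` equals `4π(ln R + ln n)`; this tends to infinity with `n`,
while the true `L²(ℝ²)` norm of `g_n` stays bounded by `2πR`. -/
theorem radon_counterexample_flat_polar_integral (R : ℝ) (hR : 0 < R) :
    (∀ n : ℕ, 1 / R < (n : ℝ) →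
      2 * ∫ θ in (0 : ℝ)..(2 * π), ∫ σ in (1 / (n : ℝ))..R,
          (if 1 / (n : ℝ) ≤ ‖σ • unitVec θ‖ ∧ ‖σ • unitVec θ‖ ≤ R
            then ‖σ • unitVec θ‖ ^ (-(1 / 2) : ℝ) else 0) ^ 2
        = 4 * π * (Real.log R + Real.log n)) ∧
    Filter.Tendsto (fun n : ℕ => 4 * π * (Real.log R + Real.log n))
      Filter.atTop Filter.atTop ∧
    (∀ n : ℕ, 1 / R < (n : ℝ) →
      ∫ ξ : EuclideanSpace ℝ (Fin 2),
        (if 1 / (n : ℝ) ≤ ‖ξ‖ ∧ ‖ξ‖ ≤ R then ‖ξ‖ ^ (-(1 / 2) : ℝ) else 0) ^ 2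
        ≤ 2 * π * R) := by
  refine ⟨?_, ?_, ?_⟩
  · intro n hn
    have hn0 : (0 : ℝ) < n := lt_trans (by positivity) hn
    have hinv : 1 / (n : ℝ) < R := by
      rw [div_lt_iff₀ hn0]
      rw [div_lt_iff₀ hR] at hn
      linarith [hn]
    have hinv0 : (0 : ℝ) < 1 / n := by positivity
    have key : ∀ θ : ℝ, (∫ σ in (1 / (n : ℝ))..R,
        (if 1 / (n : ℝ) ≤ ‖σ • unitVec θ‖ ∧ ‖σ • unitVec θ‖ ≤ R
          then ‖σ • unitVec θ‖ ^ (-(1 / 2) : ℝ) else 0) ^ 2)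
        = Real.log R + Real.log n := by
      intro θ
      have : (∫ σ in (1 / (n : ℝ))..R,
          (if 1 / (n : ℝ) ≤ ‖σ • unitVec θ‖ ∧ ‖σ • unitVec θ‖ ≤ R
            then ‖σ • unitVec θ‖ ^ (-(1 / 2) : ℝ) else 0) ^ 2)
          = ∫ σ in (1 / (n : ℝ))..R, σ⁻¹ := by
        apply intervalIntegral.integral_congr
        intro σ hσ
        rw [Set.uIcc_of_le hinv.le] at hσ
        obtain ⟨h1, h2⟩ := hσ
        have hσ0 : (0 : ℝ) < σ := lt_of_lt_of_le hinv0 h1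
        have hnorm : ‖σ • unitVec θ‖ = σ := by
          rw [norm_smul, norm_unitVec, mul_one, Real.norm_eq_abs, abs_of_pos hσ0]
        simp only [hnorm]
        rw [if_pos ⟨h1, h2⟩]
        rw [← Real.rpow_natCast (σ ^ (-(1/2) : ℝ)) 2, ← Real.rpow_mul hσ0.le]
        norm_num
        exact Real.rpow_neg_one σ
      rw [this, integral_inv_of_pos hinv0 hR, Real.log_div hR.ne' (by positivity),
        Real.log_div one_ne_zero hn0.ne', Real.log_one]
      ring
    rw [intervalIntegral.integral_congr (fun θ _ => key θ),
      intervalIntegral.integral_const]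
    simp only [smul_eq_mul]
    ring
  · have hπ : (0 : ℝ) < 4 * π := by positivity
    apply Filter.Tendsto.const_mul_atTop hπ
    apply Filter.tendsto_atTop_add_const_left
    exact (Real.tendsto_log_atTop).comp tendsto_natCast_atTop_atTop
  · intro n hn
    have hn0 : (0 : ℝ) < n := lt_trans (by positivity) hn
    have hinv : 1 / (n : ℝ) < R := by
      rw [div_lt_iff₀ hn0]; rw [div_lt_iff₀ hR] at hn; linarith [hn]
    have hinv0 : (0 : ℝ) < 1 / n := by positivity
    set f : ℝ → ℝ := fun y =>
      (if 1 / (n : ℝ) ≤ y ∧ y ≤ R then y ^ (-(1 / 2) : ℝ) else 0) ^ 2 with hf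
    have : (∫ ξ : EuclideanSpace ℝ (Fin 2),
        (if 1 / (n : ℝ) ≤ ‖ξ‖ ∧ ‖ξ‖ ≤ R then ‖ξ‖ ^ (-(1 / 2) : ℝ) else 0) ^ 2)
        = ∫ ξ : EuclideanSpace ℝ (Fin 2), f ‖ξ‖ := rfl
    rw [this, integral_fun_norm_addHaar volume f]
    have hdim : Module.finrank ℝ (EuclideanSpace ℝ (Fin 2)) = 2 :=
      finrank_euclideanSpace_fin
    rw [hdim]
    have hball : (volume (Metric.ball (0 : EuclideanSpace ℝ (Fin 2)) 1)).toReal = π := by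
      rw [EuclideanSpace.volume_ball]
      simp only [Fintype.card_fin]
      have h2 : ((2 : ℕ) : ℝ) / 2 + 1 = 2 := by norm_num
      rw [h2, Real.Gamma_two]
      norm_num [Real.sq_sqrt Real.pi_nonneg, ENNReal.toReal_ofReal Real.pi_nonneg]
    rw [measureReal_def, hball]
    have hint : (∫ y in Set.Ioi (0 : ℝ), y ^ (2 - 1) • f y)
        = ∫ y in Set.Ioi (0 : ℝ), (Set.Icc (1 / (n : ℝ)) R).indicator (fun _ => (1:ℝ)) y := by
      apply setIntegral_congr_fun measurableSet_Ioi
      intro y hy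
      have hy0 : (0 : ℝ) < y := hy
      simp only [hf, smul_eq_mul, pow_one]
      by_cases hc : 1 / (n : ℝ) ≤ y ∧ y ≤ R
      · rw [if_pos hc, Set.indicator_of_mem (Set.mem_Icc.mpr hc)]
        rw [← Real.rpow_natCast (y ^ (-(1/2) : ℝ)) 2, ← Real.rpow_mul hy0.le]
        norm_num
        rw [Real.rpow_neg_one]
        field_simp
      · rw [if_neg hc, Set.indicator_of_notMem (by simpa [Set.mem_Icc] using hc)]
        ring
    rw [hint, setIntegral_indicator measurableSet_Icc]
    have hsub : Set.Ioi (0:ℝ) ∩ Set.Icc (1 / (n : ℝ)) R = Set.Icc (1 / (n : ℝ)) R := by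
      apply Set.inter_eq_right.mpr
      intro y hy
      exact lt_of_lt_of_le hinv0 hy.1
    rw [hsub, setIntegral_const, measureReal_def, Real.volume_Icc,
      ENNReal.toReal_ofReal (by linarith : (0:ℝ) ≤ R - 1 / n)]
    have hπ := Real.pi_pos
    simp only [nsmul_eq_mul, smul_eq_mul, mul_one]
    push_cast
    nlinarith [mul_pos hπ hinv0]
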